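/- Let v, v₁ ∈ ℝ⁷ be orthonormal vectors (|v| = |v₁| = 1, ⟨v, v₁⟩ = 0), and let J_{v₁} be the map x ↦ v₁ ⋆ x given by the cross product of the standard G₂ 3-form ρ₀. Then for all x, y in the orthogonal complement v₁^⊥ one has ρ₀(v, J_{v₁}x, J_{v₁}y) = −ρ₀(v, x, y). Equivalently, the restriction of the Hermitian form ω_W = ι_vρ₀ of v^⊥ to the hyperplane W₁ = v₁^⊥ is of Hodge type (2,0)+(0,2) with respect to the complex structure J_{v₁} of W₁. -/
import Mathlib

noncomputable section

/-- `eⁱ ∧ eʲ ∧ eᵏ` evaluated at `(x, y, z)` (a 3×3 determinant of coordinates). -/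
def tripleForm (i j k : Fin 7) (x y z : Fin 7 → ℝ) : ℝ :=
  x i * (y j * z k - y k * z j) - x j * (y i * z k - y k * z i)
    + x k * (y i * z j - y j * z i)

/-- The standard G₂ 3-form on ℝ⁷:
`ρ₀ = e¹∧e²∧e³ + e¹∧e⁴∧e⁵ + e¹∧e⁶∧e⁷ + e²∧e⁴∧e⁶ − e²∧e⁵∧e⁷ − e³∧e⁴∧e⁷ − e³∧e⁵∧e⁶`
(indices shifted down by one to `Fin 7`). -/
def rho (x y z : Fin 7 → ℝ) : ℝ :=
  tripleForm 0 1 2 x y z + tripleForm 0 3 4 x y z + tripleForm 0 5 6 x y z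
    + tripleForm 1 3 5 x y z - tripleForm 1 4 6 x y z - tripleForm 2 3 6 x y z
    - tripleForm 2 4 5 x y z

/-- The standard inner product on ℝ⁷. -/
def inn (x y : Fin 7 → ℝ) : ℝ := ∑ i, x i * y i

/-- The cross product on ℝ⁷ determined by `ρ₀`: the unique vector with
`⟨x ⋆ y, z⟩ = ρ₀ (x, y, z)`; its `i`-th coordinate is `ρ₀ (x, y, eᵢ)`. -/
def cross (x y : Fin 7 → ℝ) : Fin 7 → ℝ := fun i => rho x y (Pi.single i 1)

set_option linter.unreachableTactic false

set_option maxHeartbeats 1000000 in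
set_option maxRecDepth 100000 in
/-- for orthonormal `v, v₁` and all `x, y` in `v₁^⊥`,
`rho (v, J_{v₁} x, J_{v₁} y) = − rho (v, x, y)`: the restriction of the Hermitian form
`ω_W = i_v rho` of `v^⊥` to `W₁ = v₁^⊥` is of Hodge type (2,0)+(0,2) w.r.t. `J_{v₁}`. -/
theorem stmt6 (v v₁ : Fin 7 → ℝ) (hv : inn v v = 1) (hv₁ : inn v₁ v₁ = 1)
    (hvv₁ : inn v v₁ = 0)
    (x y : Fin 7 → ℝ) (hx : inn v₁ x = 0) (hy : inn v₁ y = 0) :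
    rho v (cross v₁ x) (cross v₁ y) = -(rho v x y) := by
  have cx0 : cross v₁ x 0 = (((-v₁ 6 * x 5) + (v₁ 5 * x 6 + (-v₁ 4 * x 3))) + (v₁ 3 * x 4 + ((-v₁ 2 * x 1) + v₁ 1 * x 2))) := by
    simp only [cross, rho, tripleForm, Pi.single_apply, Fin.reduceEq, reduceIte, Fin.isValue]
    ring
  have cx1 : cross v₁ x 1 = ((v₁ 6 * x 4 + ((-v₁ 5 * x 3) + (-v₁ 4 * x 6))) + (v₁ 3 * x 5 + (v₁ 2 * x 0 + (-v₁ 0 * x 2)))) := by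
    simp only [cross, rho, tripleForm, Pi.single_apply, Fin.reduceEq, reduceIte, Fin.isValue]
    ring
  have cx2 : cross v₁ x 2 = ((v₁ 6 * x 3 + (v₁ 5 * x 4 + (-v₁ 4 * x 5))) + ((-v₁ 3 * x 6) + ((-v₁ 1 * x 0) + v₁ 0 * x 1))) := by
    simp only [cross, rho, tripleForm, Pi.single_apply, Fin.reduceEq, reduceIte, Fin.isValue]
    ring
  have cx3 : cross v₁ x 3 = (((-v₁ 6 * x 2) + (v₁ 5 * x 1 + v₁ 4 * x 0)) + (v₁ 2 * x 6 + ((-v₁ 1 * x 5) + (-v₁ 0 * x 4)))) := by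
    simp only [cross, rho, tripleForm, Pi.single_apply, Fin.reduceEq, reduceIte, Fin.isValue]
    ring
  have cx4 : cross v₁ x 4 = (((-v₁ 6 * x 1) + ((-v₁ 5 * x 2) + (-v₁ 3 * x 0))) + (v₁ 2 * x 5 + (v₁ 1 * x 6 + v₁ 0 * x 3))) := by
    simp only [cross, rho, tripleForm, Pi.single_apply, Fin.reduceEq, reduceIte, Fin.isValue]
    ring
  have cx5 : cross v₁ x 5 = ((v₁ 6 * x 0 + (v₁ 4 * x 2 + (-v₁ 3 * x 1))) + ((-v₁ 2 * x 4) + (v₁ 1 * x 3 + (-v₁ 0 * x 6)))) := by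
    simp only [cross, rho, tripleForm, Pi.single_apply, Fin.reduceEq, reduceIte, Fin.isValue]
    ring
  have cx6 : cross v₁ x 6 = (((-v₁ 5 * x 0) + (v₁ 4 * x 1 + v₁ 3 * x 2)) + ((-v₁ 2 * x 3) + ((-v₁ 1 * x 4) + v₁ 0 * x 5))) := by
    simp only [cross, rho, tripleForm, Pi.single_apply, Fin.reduceEq, reduceIte, Fin.isValue]
    ring
  have cy0 : cross v₁ y 0 = (((-v₁ 6 * y 5) + (v₁ 5 * y 6 + (-v₁ 4 * y 3))) + (v₁ 3 * y 4 + ((-v₁ 2 * y 1) + v₁ 1 * y 2))) := by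
    simp only [cross, rho, tripleForm, Pi.single_apply, Fin.reduceEq, reduceIte, Fin.isValue]
    ring
  have cy1 : cross v₁ y 1 = ((v₁ 6 * y 4 + ((-v₁ 5 * y 3) + (-v₁ 4 * y 6))) + (v₁ 3 * y 5 + (v₁ 2 * y 0 + (-v₁ 0 * y 2)))) := by
    simp only [cross, rho, tripleForm, Pi.single_apply, Fin.reduceEq, reduceIte, Fin.isValue]
    ring
  have cy2 : cross v₁ y 2 = ((v₁ 6 * y 3 + (v₁ 5 * y 4 + (-v₁ 4 * y 5))) + ((-v₁ 3 * y 6) + ((-v₁ 1 * y 0) + v₁ 0 * y 1))) := by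
    simp only [cross, rho, tripleForm, Pi.single_apply, Fin.reduceEq, reduceIte, Fin.isValue]
    ring
  have cy3 : cross v₁ y 3 = (((-v₁ 6 * y 2) + (v₁ 5 * y 1 + v₁ 4 * y 0)) + (v₁ 2 * y 6 + ((-v₁ 1 * y 5) + (-v₁ 0 * y 4)))) := by
    simp only [cross, rho, tripleForm, Pi.single_apply, Fin.reduceEq, reduceIte, Fin.isValue]
    ring
  have cy4 : cross v₁ y 4 = (((-v₁ 6 * y 1) + ((-v₁ 5 * y 2) + (-v₁ 3 * y 0))) + (v₁ 2 * y 5 + (v₁ 1 * y 6 + v₁ 0 * y 3))) := by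
    simp only [cross, rho, tripleForm, Pi.single_apply, Fin.reduceEq, reduceIte, Fin.isValue]
    ring
  have cy5 : cross v₁ y 5 = ((v₁ 6 * y 0 + (v₁ 4 * y 2 + (-v₁ 3 * y 1))) + ((-v₁ 2 * y 4) + (v₁ 1 * y 3 + (-v₁ 0 * y 6)))) := by
    simp only [cross, rho, tripleForm, Pi.single_apply, Fin.reduceEq, reduceIte, Fin.isValue]
    ring
  have cy6 : cross v₁ y 6 = (((-v₁ 5 * y 0) + (v₁ 4 * y 1 + v₁ 3 * y 2)) + ((-v₁ 2 * y 3) + ((-v₁ 1 * y 4) + v₁ 0 * y 5))) := by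
    simp only [cross, rho, tripleForm, Pi.single_apply, Fin.reduceEq, reduceIte, Fin.isValue]
    ring
  simp only [inn, Fin.sum_univ_seven] at hx hy hv₁ hvv₁
  have hz : (((((((-v 6 * v₁ 5 * y 0) + v 6 * v₁ 4 * y 1) + (v 6 * v₁ 3 * y 2 + ((-v 6 * v₁ 2 * y 3) + (-v 6 * v₁ 1 * y 4)))) + ((v 6 * v₁ 0 * y 5 + v 5 * v₁ 6 * y 0) + (v 5 * v₁ 4 * y 2 + ((-v 5 * v₁ 3 * y 1) + (-v 5 * v₁ 2 * y 4))))) + (((v 5 * v₁ 1 * y 3 + (-v 5 * v₁ 0 * y 6)) + ((-v 4 * v₁ 6 * y 1) + ((-v 4 * v₁ 5 * y 2) + (-v 4 * v₁ 3 * y 0)))) + ((v 4 * v₁ 2 * y 5 + (v 4 * v₁ 1 * y 6 + v 4 * v₁ 0 * y 3)) + ((-v 3 * v₁ 6 * y 2) + (v 3 * v₁ 5 * y 1 + v 3 * v₁ 4 * y 0))))) + ((((v 3 * v₁ 2 * y 6 + (-v 3 * v₁ 1 * y 5)) + ((-v 3 * v₁ 0 * y 4) + (v 2 * v₁ 6 *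 y 3 + v 2 * v₁ 5 * y 4))) + (((-v 2 * v₁ 4 * y 5) + (-v 2 * v₁ 3 * y 6)) + ((-v 2 * v₁ 1 * y 0) + (v 2 * v₁ 0 * y 1 + v 1 * v₁ 6 * y 4)))) + ((((-v 1 * v₁ 5 * y 3) + (-v 1 * v₁ 4 * y 6)) + (v 1 * v₁ 3 * y 5 + (v 1 * v₁ 2 * y 0 + (-v 1 * v₁ 0 * y 2)))) + (((-v 0 * v₁ 6 * y 5) + (v 0 * v₁ 5 * y 6 + (-v 0 * v₁ 4 * y 3))) + (v 0 * v₁ 3 * y 4 + ((-v 0 * v₁ 2 * y 1) + v 0 * v₁ 1 * y 2))))))) * (((v₁ 6 * x 6 + (v₁ 5 * x 5 + v₁ 4 * x 4)) + ((v₁ 3 * x 3 + v₁ 2 * x 2) + (v₁ 1 * x 1 + v₁ 0 * x 0)))) + ((((((v 6 * v₁ 5 * x 0 + (-v 6 * v₁ 4 * x 1)) + ((-v 6 * v₁ 3 * x 2) + (v 6 * v₁ 2 * x 3 + v 6 * v₁ 1 * x 4))) + (((-v 6 * v₁ 0 * x 5) + (-v 5 * v₁ 6 * x 0)) + ((-v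 5 * v₁ 4 * x 2) + (v 5 * v₁ 3 * x 1 + v 5 * v₁ 2 * x 4)))) + ((((-v 5 * v₁ 1 * x 3) + v 5 * v₁ 0 * x 6) + (v 4 * v₁ 6 * x 1 + (v 4 * v₁ 5 * x 2 + v 4 * v₁ 3 * x 0))) + (((-v 4 * v₁ 2 * x 5) + ((-v 4 * v₁ 1 * x 6) + (-v 4 * v₁ 0 * x 3))) + (v 3 * v₁ 6 * x 2 + ((-v 3 * v₁ 5 * x 1) + (-v 3 * v₁ 4 * x 0)))))) + (((((-v 3 * v₁ 2 * x 6) + v 3 * v₁ 1 * x 5) + (v 3 * v₁ 0 * x 4 + ((-v 2 * v₁ 6 * x 3) + (-v 2 * v₁ 5 * x 4)))) + ((v 2 * v₁ 4 * x 5 + v 2 * v₁ 3 * x 6) + (v 2 * v₁ 1 * x 0 + ((-v 2 * v₁ 0 * x 1) + (-v 1 * v₁ 6 * x 4))))) + (((v 1 * v₁ 5 * x 3 + v 1 * v₁ 4 * x 6) + ((-v 1 * v₁ 3 * x 5) + ((-v 1 * v₁ 2 * x 0) + v 1 * v₁ 0 * x 2))) + ((v 0 * v₁ 6 * x 5 +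 ((-v 0 * v₁ 5 * x 6) + v 0 * v₁ 4 * x 3)) + ((-v 0 * v₁ 3 * x 4) + (v 0 * v₁ 2 * x 1 + (-v 0 * v₁ 1 * x 2)))))))) * (((v₁ 6 * y 6 + (v₁ 5 * y 5 + v₁ 4 * y 4)) + ((v₁ 3 * y 3 + v₁ 2 * y 2) + (v₁ 1 * y 1 + v₁ 0 * y 0))))
      + (((((((-2) * v₁ 6 * x 5 * y 0 + 2 * v₁ 6 * x 4 * y 1) + (2 * v₁ 6 * x 3 * y 2 + ((-2) * v₁ 6 * x 2 * y 3 + (-2) * v₁ 6 * x 1 * y 4))) + ((2 * v₁ 6 * x 0 * y 5 + 2 * v₁ 5 * x 6 * y 0) + (2 * v₁ 5 * x 4 * y 2 + ((-2) * v₁ 5 * x 3 * y 1 + (-2) * v₁ 5 * x 2 * y 4)))) + (((2 * v₁ 5 * x 1 * y 3 + (-2) * v₁ 5 * x 0 * y 6) + ((-2) * v₁ 4 * x 6 * y 1 + ((-2) * v₁ 4 * x 5 * y 2 + (-2) * v₁ 4 * x 3 * y 0))) + ((2 * v₁ 4 * x 2 * y 5 + (2 * v₁ 4 * x 1 * y 6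 + 2 * v₁ 4 * x 0 * y 3)) + ((-2) * v₁ 3 * x 6 * y 2 + (2 * v₁ 3 * x 5 * y 1 + 2 * v₁ 3 * x 4 * y 0))))) + ((((2 * v₁ 3 * x 2 * y 6 + (-2) * v₁ 3 * x 1 * y 5) + ((-2) * v₁ 3 * x 0 * y 4 + (2 * v₁ 2 * x 6 * y 3 + 2 * v₁ 2 * x 5 * y 4))) + (((-2) * v₁ 2 * x 4 * y 5 + (-2) * v₁ 2 * x 3 * y 6) + ((-2) * v₁ 2 * x 1 * y 0 + (2 * v₁ 2 * x 0 * y 1 + 2 * v₁ 1 * x 6 * y 4)))) + ((((-2) * v₁ 1 * x 5 * y 3 + (-2) * v₁ 1 * x 4 * y 6) + (2 * v₁ 1 * x 3 * y 5 + (2 * v₁ 1 * x 2 * y 0 + (-2) * v₁ 1 * x 0 * y 2))) + (((-2) * v₁ 0 * x 6 * y 5 + (2 * v₁ 0 * x 5 * y 6 + (-2) * v₁ 0 * x 4 * y 3)) + (2 * v₁ 0 * x 3 * y 4 + ((-2) * v₁ 0 * x 2 * y 1 + 2 * v₁ 0 * x 1 * y 2))))))) * (((v 6 * v₁ 6 +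 (v 5 * v₁ 5 + v 4 * v₁ 4)) + ((v 3 * v₁ 3 + v 2 * v₁ 2) + (v 1 * v₁ 1 + v 0 * v₁ 0)))) + ((((((((-v 6 * x 5 * y 0) + v 6 * x 4 * y 1) + (v 6 * x 3 * y 2 + ((-v 6 * x 2 * y 3) + (-v 6 * x 1 * y 4)))) + ((v 6 * x 0 * y 5 + v 5 * x 6 * y 0) + (v 5 * x 4 * y 2 + ((-v 5 * x 3 * y 1) + (-v 5 * x 2 * y 4))))) + (((v 5 * x 1 * y 3 + (-v 5 * x 0 * y 6)) + ((-v 4 * x 6 * y 1) + ((-v 4 * x 5 * y 2) + (-v 4 * x 3 * y 0)))) + ((v 4 * x 2 * y 5 + (v 4 * x 1 * y 6 + v 4 * x 0 * y 3)) + ((-v 3 * x 6 * y 2) + (v 3 * x 5 * y 1 + v 3 * x 4 * y 0))))) + ((((v 3 * x 2 * y 6 + (-v 3 * x 1 * y 5)) + ((-v 3 * x 0 * y 4) + (v 2 * x 6 * y 3 + v 2 * x 5 * y 4))) + (((-v 2 * x 4 * y 5) + (-v 2 * x 3 * y 6)) + ((-v 2 * x 1 * y 0) + (v 2 * x 0 *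 y 1 + v 1 * x 6 * y 4)))) + ((((-v 1 * x 5 * y 3) + (-v 1 * x 4 * y 6)) + (v 1 * x 3 * y 5 + (v 1 * x 2 * y 0 + (-v 1 * x 0 * y 2)))) + (((-v 0 * x 6 * y 5) + (v 0 * x 5 * y 6 + (-v 0 * x 4 * y 3))) + (v 0 * x 3 * y 4 + ((-v 0 * x 2 * y 1) + v 0 * x 1 * y 2))))))) - (((((((-v 6 * x 5 * y 0) + v 6 * x 4 * y 1) + (v 6 * x 3 * y 2 + ((-v 6 * x 2 * y 3) + (-v 6 * x 1 * y 4)))) + ((v 6 * x 0 * y 5 + v 5 * x 6 * y 0) + (v 5 * x 4 * y 2 + ((-v 5 * x 3 * y 1) + (-v 5 * x 2 * y 4))))) + (((v 5 * x 1 * y 3 + (-v 5 * x 0 * y 6)) + ((-v 4 * x 6 * y 1) + ((-v 4 * x 5 * y 2) + (-v 4 * x 3 * y 0)))) + ((v 4 * x 2 * y 5 + (v 4 * x 1 * y 6 + v 4 * x 0 * y 3)) + ((-v 3 * x 6 * y 2) + (v 3 * x 5 * y 1 + v 3 * x 4 * y 0))))) + ((((v 3 * x 2 * y 6 + (-v 3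 * x 1 * y 5)) + ((-v 3 * x 0 * y 4) + (v 2 * x 6 * y 3 + v 2 * x 5 * y 4))) + (((-v 2 * x 4 * y 5) + (-v 2 * x 3 * y 6)) + ((-v 2 * x 1 * y 0) + (v 2 * x 0 * y 1 + v 1 * x 6 * y 4)))) + ((((-v 1 * x 5 * y 3) + (-v 1 * x 4 * y 6)) + (v 1 * x 3 * y 5 + (v 1 * x 2 * y 0 + (-v 1 * x 0 * y 2)))) + (((-v 0 * x 6 * y 5) + (v 0 * x 5 * y 6 + (-v 0 * x 4 * y 3))) + (v 0 * x 3 * y 4 + ((-v 0 * x 2 * y 1) + v 0 * x 1 * y 2))))))) * (((v₁ 6 * v₁ 6 + (v₁ 5 * v₁ 5 + v₁ 4 * v₁ 4)) + ((v₁ 3 * v₁ 3 + v₁ 2 * v₁ 2) + (v₁ 1 * v₁ 1 + v₁ 0 * v₁ 0))))) = 0 := by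
    linear_combination (((((((-v 6 * v₁ 5 * y 0) + v 6 * v₁ 4 * y 1) + (v 6 * v₁ 3 * y 2 + ((-v 6 * v₁ 2 * y 3) + (-v 6 * v₁ 1 * y 4)))) + ((v 6 * v₁ 0 * y 5 + v 5 * v₁ 6 * y 0) + (v 5 * v₁ 4 * y 2 + ((-v 5 * v₁ 3 * y 1) + (-v 5 * v₁ 2 * y 4))))) + (((v 5 * v₁ 1 * y 3 + (-v 5 * v₁ 0 * y 6)) + ((-v 4 * v₁ 6 * y 1) + ((-v 4 * v₁ 5 * y 2) + (-v 4 * v₁ 3 * y 0)))) + ((v 4 * v₁ 2 * y 5 + (v 4 * v₁ 1 * y 6 + v 4 * v₁ 0 * y 3)) + ((-v 3 * v₁ 6 * y 2) + (v 3 * v₁ 5 * y 1 + v 3 * v₁ 4 * y 0))))) + ((((v 3 * v₁ 2 * y 6 + (-v 3 * v₁ 1 * y 5)) + ((-v 3 * v₁ 0 * y 4) + (v 2 * v₁ 6 * y 3 + v 2 * v₁ 5 * y 4))) + (((-v 2 * v₁ 4 * y 5) + (-v 2 * v₁ 3 * y 6)) + ((-v 2 * v₁ 1 * y 0) + (v 2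 * v₁ 0 * y 1 + v 1 * v₁ 6 * y 4)))) + ((((-v 1 * v₁ 5 * y 3) + (-v 1 * v₁ 4 * y 6)) + (v 1 * v₁ 3 * y 5 + (v 1 * v₁ 2 * y 0 + (-v 1 * v₁ 0 * y 2)))) + (((-v 0 * v₁ 6 * y 5) + (v 0 * v₁ 5 * y 6 + (-v 0 * v₁ 4 * y 3))) + (v 0 * v₁ 3 * y 4 + ((-v 0 * v₁ 2 * y 1) + v 0 * v₁ 1 * y 2))))))) * hx + ((((((v 6 * v₁ 5 * x 0 + (-v 6 * v₁ 4 * x 1)) + ((-v 6 * v₁ 3 * x 2) + (v 6 * v₁ 2 * x 3 + v 6 * v₁ 1 * x 4))) + (((-v 6 * v₁ 0 * x 5) + (-v 5 * v₁ 6 * x 0)) + ((-v 5 * v₁ 4 * x 2) + (v 5 * v₁ 3 * x 1 + v 5 * v₁ 2 * x 4)))) + ((((-v 5 * v₁ 1 * x 3) + v 5 * v₁ 0 * x 6) + (v 4 * v₁ 6 * x 1 + (v 4 * v₁ 5 * x 2 + v 4 * v₁ 3 * x 0))) + (((-v 4 * v₁ 2 * x 5) + ((-v 4 * v₁ 1 *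 x 6) + (-v 4 * v₁ 0 * x 3))) + (v 3 * v₁ 6 * x 2 + ((-v 3 * v₁ 5 * x 1) + (-v 3 * v₁ 4 * x 0)))))) + (((((-v 3 * v₁ 2 * x 6) + v 3 * v₁ 1 * x 5) + (v 3 * v₁ 0 * x 4 + ((-v 2 * v₁ 6 * x 3) + (-v 2 * v₁ 5 * x 4)))) + ((v 2 * v₁ 4 * x 5 + v 2 * v₁ 3 * x 6) + (v 2 * v₁ 1 * x 0 + ((-v 2 * v₁ 0 * x 1) + (-v 1 * v₁ 6 * x 4))))) + (((v 1 * v₁ 5 * x 3 + v 1 * v₁ 4 * x 6) + ((-v 1 * v₁ 3 * x 5) + ((-v 1 * v₁ 2 * x 0) + v 1 * v₁ 0 * x 2))) + ((v 0 * v₁ 6 * x 5 + ((-v 0 * v₁ 5 * x 6) + v 0 * v₁ 4 * x 3)) + ((-v 0 * v₁ 3 * x 4) + (v 0 * v₁ 2 * x 1 + (-v 0 * v₁ 1 * x 2)))))))) * hy + (((((((-2) * v₁ 6 * x 5 * y 0 + 2 * v₁ 6 * x 4 * y 1) + (2 * v₁ 6 * x 3 * y 2 + ((-2) * v₁ 6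 * x 2 * y 3 + (-2) * v₁ 6 * x 1 * y 4))) + ((2 * v₁ 6 * x 0 * y 5 + 2 * v₁ 5 * x 6 * y 0) + (2 * v₁ 5 * x 4 * y 2 + ((-2) * v₁ 5 * x 3 * y 1 + (-2) * v₁ 5 * x 2 * y 4)))) + (((2 * v₁ 5 * x 1 * y 3 + (-2) * v₁ 5 * x 0 * y 6) + ((-2) * v₁ 4 * x 6 * y 1 + ((-2) * v₁ 4 * x 5 * y 2 + (-2) * v₁ 4 * x 3 * y 0))) + ((2 * v₁ 4 * x 2 * y 5 + (2 * v₁ 4 * x 1 * y 6 + 2 * v₁ 4 * x 0 * y 3)) + ((-2) * v₁ 3 * x 6 * y 2 + (2 * v₁ 3 * x 5 * y 1 + 2 * v₁ 3 * x 4 * y 0))))) + ((((2 * v₁ 3 * x 2 * y 6 + (-2) * v₁ 3 * x 1 * y 5) + ((-2) * v₁ 3 * x 0 * y 4 + (2 * v₁ 2 * x 6 * y 3 + 2 * v₁ 2 * x 5 * y 4))) + (((-2) * v₁ 2 * x 4 * y 5 + (-2) * v₁ 2 * x 3 * y 6) + ((-2) * v₁ 2 * x 1 * y 0 + (2 * v₁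 2 * x 0 * y 1 + 2 * v₁ 1 * x 6 * y 4)))) + ((((-2) * v₁ 1 * x 5 * y 3 + (-2) * v₁ 1 * x 4 * y 6) + (2 * v₁ 1 * x 3 * y 5 + (2 * v₁ 1 * x 2 * y 0 + (-2) * v₁ 1 * x 0 * y 2))) + (((-2) * v₁ 0 * x 6 * y 5 + (2 * v₁ 0 * x 5 * y 6 + (-2) * v₁ 0 * x 4 * y 3)) + (2 * v₁ 0 * x 3 * y 4 + ((-2) * v₁ 0 * x 2 * y 1 + 2 * v₁ 0 * x 1 * y 2))))))) * hvv₁ - (((((((-v 6 * x 5 * y 0) + v 6 * x 4 * y 1) + (v 6 * x 3 * y 2 + ((-v 6 * x 2 * y 3) + (-v 6 * x 1 * y 4)))) + ((v 6 * x 0 * y 5 + v 5 * x 6 * y 0) + (v 5 * x 4 * y 2 + ((-v 5 * x 3 * y 1) + (-v 5 * x 2 * y 4))))) + (((v 5 * x 1 * y 3 + (-v 5 * x 0 * y 6)) + ((-v 4 * x 6 * y 1) + ((-v 4 * x 5 * y 2) + (-v 4 * x 3 * y 0)))) + ((v 4 * x 2 * y 5 + (v 4 * x 1 * y 6 + v 4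 * x 0 * y 3)) + ((-v 3 * x 6 * y 2) + (v 3 * x 5 * y 1 + v 3 * x 4 * y 0))))) + ((((v 3 * x 2 * y 6 + (-v 3 * x 1 * y 5)) + ((-v 3 * x 0 * y 4) + (v 2 * x 6 * y 3 + v 2 * x 5 * y 4))) + (((-v 2 * x 4 * y 5) + (-v 2 * x 3 * y 6)) + ((-v 2 * x 1 * y 0) + (v 2 * x 0 * y 1 + v 1 * x 6 * y 4)))) + ((((-v 1 * x 5 * y 3) + (-v 1 * x 4 * y 6)) + (v 1 * x 3 * y 5 + (v 1 * x 2 * y 0 + (-v 1 * x 0 * y 2)))) + (((-v 0 * x 6 * y 5) + (v 0 * x 5 * y 6 + (-v 0 * x 4 * y 3))) + (v 0 * x 3 * y 4 + ((-v 0 * x 2 * y 1) + v 0 * x 1 * y 2))))))) * hv₁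
  rw [eq_neg_iff_add_eq_zero, ← hz]
  simp only [rho, tripleForm, cx0, cx1, cx2, cx3, cx4, cx5, cx6, cy0, cy1, cy2, cy3, cy4, cy5, cy6]
  ring
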